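/- Let n ≥ 2 and R, Q ∈ SO(n). Then |R e_n − Q e_n| ≤ Σ_{i=1}^{n−1} |R e_i − Q e_i|, where e_1, …, e_n are the standard unit vectors and |·| is the Euclidean norm on ℝⁿ. -/

import Mathlib

open MeasureTheory Filter Topology Set
open scoped ENNReal

noncomputable section

namespace LayeredRigidity

abbrev Vec (n : ℕ) := EuclideanSpace ℝ (Fin n)
abbrev Mat (n : ℕ) := Matrix (Fin n) (Fin n) ℝ

/-- Interpret a plain function `Fin n → ℝ` as an element of Euclidean space. -/
def toVec {n : ℕ} (f : Fin n → ℝ) : Vec n := WithLp.toLp 2 f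

/-- The last coordinate `x_n` of a vector. -/
def coordLast {n : ℕ} (x : Vec n) : ℝ :=
  if h : 0 < n then x ⟨n - 1, Nat.sub_lt h Nat.one_pos⟩ else 0

/-- The first coordinate `x_1` of a vector. -/
def coord0 {n : ℕ} (x : Vec n) : ℝ := if h : 0 < n then x ⟨0, h⟩ else 0

/-- Standard basis vector `e_j`. -/
def bas {n : ℕ} (j : Fin n) : Vec n := EuclideanSpace.single j 1

/-- The last standard basis vector `e_n`, as a plain function. -/
def eL {n : ℕ} : Fin n → ℝ := fun j => if (j : ℕ) + 1 = n then 1 else 0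

/-- The last standard basis vector `e_n`. -/
def eLast {n : ℕ} : Vec n := toVec eL

/-- The first standard basis vector `e_1`. -/
def eFirst {n : ℕ} : Vec n := toVec (fun j => if (j : ℕ) = 0 then 1 else 0)

/-- Replace the last coordinate of `x` by `t`. -/
def setLast {n : ℕ} (x : Vec n) (t : ℝ) : Vec n :=
  toVec (fun j => if (j : ℕ) + 1 = n then t else x j)

/-- Frobenius norm of a matrix. -/
def frob {n : ℕ} (F : Mat n) : ℝ := Real.sqrt (∑ i, ∑ j, (F i j) ^ 2)

/-- The special orthogonal group `SO(n)`, as a set of matrices. -/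
def SO (n : ℕ) : Set (Mat n) := {F | F * F.transpose = 1 ∧ F.det = 1}

/-- Frobenius distance of a matrix to `SO(n)`. -/
def distSO {n : ℕ} (F : Mat n) : ℝ := sInf ((fun Q => frob (F - Q)) '' SO n)

/-- Matrix-vector multiplication, landing in Euclidean space. -/
def matVec {n : ℕ} (A : Mat n) (x : Vec n) : Vec n := toVec (fun i => ∑ j, A i j * x j)

/-- Outer product `v ⊗ w = v wᵀ`. -/
def outerM {n : ℕ} (v w : Fin n → ℝ) : Mat n := Matrix.of fun i j => v i * w j

/-- The `e_n`-directional component of a direction-indexed family (i.e. `v (n-1)`). -/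
def lastOf {α : Type*} [AddCommMonoid α] {n : ℕ} (v : Fin n → α) : α :=
  ∑ j : Fin n, if (j : ℕ) + 1 = n then v j else 0

/-- The (periodically extended, `ε`-dilated) stiff layers `ε Y_stiff ⊆ ℝⁿ`. -/
def stiffLayers {n : ℕ} (lam ε : ℝ) : Set (Vec n) :=
  {x | (⌈coordLast x / ε⌉ : ℝ) - coordLast x / ε ≤ 1 - lam}

/-- The (periodically extended, `ε`-dilated) soft layers `ε Y_soft ⊆ ℝⁿ`. -/
def softLayers {n : ℕ} (lam ε : ℝ) : Set (Vec n) :=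
  {x | 1 - lam < (⌈coordLast x / ε⌉ : ℝ) - coordLast x / ε}

/-- One-dimensional stiff layers `ε I_stiff ⊆ ℝ`. -/
def stiff1D (lam ε : ℝ) : Set ℝ := {t | (⌈t / ε⌉ : ℝ) - t / ε ≤ 1 - lam}

/-- One-dimensional soft layers `ε I_soft ⊆ ℝ`. -/
def soft1D (lam ε : ℝ) : Set ℝ := {t | 1 - lam < (⌈t / ε⌉ : ℝ) - t / ε}

/-- A set is cross-section connected if all its horizontal cross-sections are connected. -/
def CrossSectionConnected {n : ℕ} (Ω : Set (Vec n)) : Prop :=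
  ∀ t : ℝ, IsPreconnected {x ∈ Ω | coordLast x = t}

/-- A set is flat if every nonempty horizontal cross-section of its closure has nonempty
relative interior in the corresponding hyperplane. -/
def Flat {n : ℕ} (Ω : Set (Vec n)) : Prop :=
  ∀ t : ℝ, (closure Ω ∩ {x | coordLast x = t}).Nonempty →
    ∃ x ∈ closure Ω ∩ {x | coordLast x = t}, ∃ r > (0 : ℝ),
      Metric.ball x r ∩ {y | coordLast y = t} ⊆ closure Ω

/-- A Lipschitz domain: an open nonempty set whose boundary is locally, after an isometry of the
ambient space, the graph of a Lipschitz function with the set lying on one side. -/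
def IsLipschitzDomain {n : ℕ} (Ω : Set (Vec n)) : Prop :=
  IsOpen Ω ∧ Ω.Nonempty ∧
  ∀ x ∈ frontier Ω, ∃ e : Vec n ≃ᵢ Vec n, ∃ K : NNReal, ∃ f : Vec n → ℝ, ∃ r : ℝ,
    0 < r ∧ LipschitzWith K f ∧
    ∀ y ∈ Metric.ball x r, (y ∈ Ω ↔ f (setLast (e y) 0) < coordLast (e y))

/-- Componentwise membership in `L^p(Ω)`. -/
def LpFn {n : ℕ} {ι : Type*} (Ω : Set (Vec n)) (p : ℝ) (u : Vec n → ι → ℝ) : Prop :=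
  ∀ i, MemLp (fun x => u x i) (ENNReal.ofReal p) (volume.restrict Ω)

/-- `G` is the weak (distributional) derivative of `u` on `Ω`:
integration by parts against smooth compactly supported test functions. -/
def IsWeakDeriv {n : ℕ} {ι : Type*} (Ω : Set (Vec n)) (u : Vec n → ι → ℝ)
    (G : Vec n → ι → Fin n → ℝ) : Prop :=
  ∀ φ : Vec n → ℝ, ContDiff ℝ (⊤ : ℕ∞) φ → HasCompactSupport φ → tsupport φ ⊆ Ω →
    ∀ i j, ∫ x in Ω, u x i * fderiv ℝ φ x (bas j) = - ∫ x in Ω, G x i j * φ x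

/-- Membership in the Sobolev space `W^{1,p}(Ω)`, with explicit weak derivative `G`. -/
def SobolevFn {n : ℕ} {ι : Type*} (Ω : Set (Vec n)) (p : ℝ) (u : Vec n → ι → ℝ)
    (G : Vec n → ι → Fin n → ℝ) : Prop :=
  LpFn Ω p u ∧ LpFn Ω p (fun x (ij : ι × Fin n) => G x ij.1 ij.2) ∧ IsWeakDeriv Ω u G

/-- `W^{1,p}(Ω;ℝⁿ)` for vector-valued maps, with gradient matrix `Du` (`(Du)_{ij} = ∂_j u_i`). -/
def SobolevVec {n : ℕ} (Ω : Set (Vec n)) (p : ℝ) (u : Vec n → Vec n)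
    (Du : Vec n → Mat n) : Prop :=
  SobolevFn Ω p (fun x i => u x i) (fun x i j => Du x i j)

/-- `W^{1,p}(Ω;ℝ^{n×n})` for matrix-valued maps; `DR x j` is the partial derivative `∂_j R`. -/
def SobolevMat {n : ℕ} (Ω : Set (Vec n)) (p : ℝ) (R : Vec n → Mat n)
    (DR : Vec n → Fin n → Mat n) : Prop :=
  SobolevFn Ω p (fun x (ij : Fin n × Fin n) => R x ij.1 ij.2) (fun x ij j => DR x j ij.1 ij.2)

/-- The conjugate exponent of `p`, as an extended real. -/
def conjE (p : ℝ) : ℝ≥0∞ := if p = 1 then ⊤ else ENNReal.ofReal (p / (p - 1))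

/-- Weak convergence in `L^p(Ω)` of a family indexed by `ε > 0`, as `ε → 0`:
testing componentwise against all `L^{p'}` functions. -/
def WeakLpFam {n : ℕ} {ι : Type*} (Ω : Set (Vec n)) (p : ℝ) (f : ℝ → Vec n → ι → ℝ)
    (g : Vec n → ι → ℝ) : Prop :=
  ∀ φ : Vec n → ℝ, MemLp φ (conjE p) (volume.restrict Ω) →
    ∀ i, Tendsto (fun ε => ∫ x in Ω, f ε x i * φ x) (𝓝[>] (0 : ℝ))
      (𝓝 (∫ x in Ω, g x i * φ x))

/-- Strong convergence in `L^p(Ω)` of a family indexed by `ε > 0`, as `ε → 0`. -/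
def StrongLpFam {n : ℕ} {ι : Type*} (Ω : Set (Vec n)) (p : ℝ) (f : ℝ → Vec n → ι → ℝ)
    (g : Vec n → ι → ℝ) : Prop :=
  ∀ i, Tendsto (fun ε => ∫ x in Ω, |f ε x i - g x i| ^ p) (𝓝[>] (0 : ℝ)) (𝓝 0)

/-- One-dimensional Sobolev space `W^{1,p}(J)` with explicit weak derivative. -/
def Sobolev1D {ι : Type*} (J : Set ℝ) (p : ℝ) (ν ν' : ℝ → ι → ℝ) : Prop :=
  (∀ i, MemLp (fun t => ν t i) (ENNReal.ofReal p) (volume.restrict J)) ∧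
  (∀ i, MemLp (fun t => ν' t i) (ENNReal.ofReal p) (volume.restrict J)) ∧
  ∀ φ : ℝ → ℝ, ContDiff ℝ (⊤ : ℕ∞) φ → HasCompactSupport φ → tsupport φ ⊆ J →
    ∀ i, ∫ t in J, ν t i * deriv φ t = - ∫ t in J, ν' t i * φ t

/-- The open unit cube `(0,1)ⁿ`. -/
def unitCube (n : ℕ) : Set (Vec n) := {x | ∀ i, x i ∈ Set.Ioo (0 : ℝ) 1}

/-- The gradient matrix of a (differentiable) map, `(∇φ)_{ij} = ∂_j φ_i`. -/
def gradMat {n : ℕ} (φ : Vec n → Vec n) (x : Vec n) : Mat n :=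
  Matrix.of fun i j => fderiv ℝ φ x (bas j) i

/-- The quasiconvex envelope of `W`, via the infimum over smooth compactly supported
perturbations on the unit cube (which has measure one). -/
def qcEnv {n : ℕ} (W : Mat n → ℝ) (F : Mat n) : ℝ :=
  sInf {v : ℝ | ∃ φ : Vec n → Vec n, ContDiff ℝ (⊤ : ℕ∞) φ ∧ tsupport φ ⊆ unitCube n ∧
    v = ∫ x in unitCube n, W (F + gradMat φ x)}

/-- The minor of `F` with rows `s` and columns `t`. -/
def minor {n : ℕ} (F : Mat n) (s t : Finset (Fin n)) (h : t.card = s.card) : ℝ :=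
  Matrix.det (Matrix.of fun i j : Fin s.card =>
    F (s.orderIsoOfFin rfl i).1 (t.orderIsoOfFin h j).1)

/-- Index type enumerating all minors of an `n × n` matrix. -/
def MinorIdx (n : ℕ) := {q : Finset (Fin n) × Finset (Fin n) // q.2.card = q.1.card}

/-- The vector of all minors of a matrix. -/
def minors {n : ℕ} (F : Mat n) : MinorIdx n → ℝ := fun q => minor F q.1.1 q.1.2 q.2

/-- A function of matrices is polyconvex if it is a convex function of the vector of minors. -/
def Polyconvex {n : ℕ} (W : Mat n → ℝ) : Prop :=
  ∃ g : (MinorIdx n → ℝ) → ℝ, ConvexOn ℝ Set.univ g ∧ ∀ F, W F = g (minors F)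

/-- The set `𝒜` of matrices of the form `R + d ⊗ e_n` with `R ∈ SO(n)`. -/
def Astar (n : ℕ) : Set (Mat n) := {F | ∃ R ∈ SO n, ∃ d : Fin n → ℝ, F = R + outerM d eL}

end LayeredRigidity

namespace LayeredRigidity

private lemma telescope {n : ℕ} {M : Type*} [AddCommGroup M] [Module ℝ M]
    (f : MultilinearMap ℝ (fun _ : Fin n => M) ℝ) (a c : Fin n → M) :
    f a - f c = ∑ i : Fin n,
      f (Function.update (fun j => if (j : ℕ) < (i : ℕ) then a j else c j) i (a i - c i)) := by
  set F : ℕ → ℝ := fun k => f (fun j => if (j : ℕ) < k then a j else c j) with hF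
  have h0 : F 0 = f c := by simp [hF]
  have hn : F n = f a := by
    simp only [hF]
    congr 1
    ext j
    simp [j.isLt]
  have step : ∀ i : Fin n,
      F ((i : ℕ) + 1) - F (i : ℕ) =
      f (Function.update (fun j => if (j : ℕ) < (i : ℕ) then a j else c j) i (a i - c i)) := by
    intro i
    rw [f.map_update_sub]
    congr 1
    · -- F (i+1) = f (update mix i (a i))
      simp only [hF]
      congr 1
      ext j
      rcases eq_or_ne j i with rfl | hj
      · simp [Function.update_self]
      · have : (j : ℕ) < (i : ℕ) + 1 ↔ (j : ℕ) < (i : ℕ) := by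
          constructor
          · intro h
            rcases Nat.lt_succ_iff_lt_or_eq.mp h with h | h
            · exact h
            · exact absurd (Fin.ext h) hj
          · omega
        simp [Function.update_of_ne hj, this]
    · simp only [hF]
      congr 1
      ext j
      rcases eq_or_ne j i with rfl | hj
      · simp [Function.update_self]
      · simp [Function.update_of_ne hj]
  calc f a - f c = F n - F 0 := by rw [h0, hn]
    _ = ∑ k ∈ Finset.range n, (F (k + 1) - F k) := (Finset.sum_range_sub F n).symm
    _ = ∑ i : Fin n, (F ((i : ℕ) + 1) - F (i : ℕ)) := (Fin.sum_univ_eq_sum_range _ n).symm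
    _ = _ := Finset.sum_congr rfl fun i _ => step i

private lemma key {n : ℕ} {u w : Fin n → EuclideanSpace ℝ (Fin n)}
    (hu : Orthonormal ℝ u) (hw : Orthonormal ℝ w)
    (hdu : (EuclideanSpace.basisFun (Fin n) ℝ).toBasis.det u = 1)
    (hdw : (EuclideanSpace.basisFun (Fin n) ℝ).toBasis.det w = 1)
    (m : Fin n) :
    ‖u m - w m‖ ≤ ∑ i ∈ Finset.univ.erase m, ‖u i - w i‖ := by
  classical
  haveI : Nonempty (Fin n) := ⟨m⟩
  set b := EuclideanSpace.basisFun (Fin n) ℝ with hb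
  set D := b.toBasis.det with hD
  by_cases hd : u m - w m = 0
  · rw [hd, norm_zero]
    exact Finset.sum_nonneg fun i _ => norm_nonneg _
  haveI : Fact (Module.finrank ℝ (EuclideanSpace ℝ (Fin n)) = n) := ⟨finrank_euclideanSpace_fin⟩
  set o := b.toBasis.orientation with ho
  have hada : ∀ v : Fin n → EuclideanSpace ℝ (Fin n), |D v| ≤ ∏ i, ‖v i‖ := fun v => by
    rw [hD, ← o.volumeForm_robust' b v]
    exact o.abs_volumeForm_apply_le v
  set d := u m - w m with hd'
  set x : EuclideanSpace ℝ (Fin n) := ‖d‖⁻¹ • d with hx'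
  have hxnorm : ‖x‖ = 1 := by
    rw [hx', norm_smul, norm_inv, norm_norm, inv_mul_cancel₀ (norm_ne_zero_iff.mpr hd)]
  -- cross product identity
  have hrep : ∀ (v : Fin n → EuclideanSpace ℝ (Fin n)), Orthonormal ℝ v → D v = 1 →
      ∀ y : EuclideanSpace ℝ (Fin n), (inner ℝ (v m) y : ℝ) = D (Function.update v m y) := by
    intro v hv hDv y
    have hcard : Fintype.card (Fin n) = Module.finrank ℝ (EuclideanSpace ℝ (Fin n)) := by
      rw [finrank_euclideanSpace_fin, Fintype.card_fin]
    let B := basisOfLinearIndependentOfCardEqFinrank hv.linearIndependent hcard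
    have hB : ⇑B = v := coe_basisOfLinearIndependentOfCardEqFinrank _ _
    let L₁ : EuclideanSpace ℝ (Fin n) →ₗ[ℝ] ℝ := D.toMultilinearMap.toLinearMap v m
    let L₂ : EuclideanSpace ℝ (Fin n) →ₗ[ℝ] ℝ := innerₛₗ ℝ (v m)
    have : L₂ = L₁ := by
      apply B.ext
      intro i
      rw [hB]
      rcases eq_or_ne i m with rfl | him
      · have h1 : L₁ (v i) = D v := by
          simp only [L₁, MultilinearMap.toLinearMap_apply, Function.update_eq_self]
          rfl
        have h2 : L₂ (v i) = 1 := by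
          simpa [L₂] using (orthonormal_iff_ite.mp hv i i)
        rw [h1, h2, hDv]
      · have h1 : L₁ (v i) = 0 := by
          simp only [L₁, MultilinearMap.toLinearMap_apply]
          refine D.map_eq_zero_of_eq _ (i := i) (j := m) ?_ him
          rw [Function.update_of_ne him, Function.update_self]
        have h2 : L₂ (v i) = 0 := by
          simpa [L₂, him.symm] using (orthonormal_iff_ite.mp hv m i)
        rw [h1, h2]
    have h := DFunLike.congr_fun this y
    simpa [L₁, L₂] using h
  set u' := Function.update u m x with hu'
  set w' := Function.update w m x with hw'
  -- norm as inner product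
  have hnorm : ‖d‖ = D u' - D w' := by
    have h1 : (inner ℝ d x : ℝ) = ‖d‖ := by
      rw [hx', real_inner_smul_right, real_inner_self_eq_norm_sq]
      rw [pow_two, ← mul_assoc, inv_mul_cancel₀ (norm_ne_zero_iff.mpr hd), one_mul]
    rw [← h1, hd', inner_sub_left, hrep u hu hdu x, hrep w hw hdw x]
  -- telescoping
  set G : Fin n → Fin n → EuclideanSpace ℝ (Fin n) := fun i =>
    Function.update (fun j => if (j : ℕ) < (i : ℕ) then u' j else w' j) i (u' i - w' i)
    with hG
  have htel : D u' - D w' = ∑ i : Fin n, D.toMultilinearMap (G i) :=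
    telescope D.toMultilinearMap u' w'
  have hterm : ∀ i : Fin n,
      D.toMultilinearMap (G i) ≤ if i = m then 0 else ‖u i - w i‖ := by
    intro i
    rcases eq_or_ne i m with rfl | him
    · have h0 : u' i - w' i = 0 := by
        rw [hu', hw', Function.update_self, Function.update_self, sub_self]
      have hz : D.toMultilinearMap (G i) = 0 := by
        simp only [hG, h0]
        exact D.toMultilinearMap.map_update_zero _ _
      rw [hz, if_pos rfl]
    · rw [if_neg him]
      refine le_trans (le_abs_self _) (le_trans (hada _) ?_)
      have hfac : ∀ j : Fin n, ‖G i j‖ ≤ if j = i then ‖u i - w i‖ else 1 := by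
        intro j
        rcases eq_or_ne j i with rfl | hj
        · rw [if_pos rfl]
          simp only [hG]
          rw [Function.update_self, hu', hw',
            Function.update_of_ne him, Function.update_of_ne him]
        
        · rw [if_neg hj]
          simp only [hG]
          rw [Function.update_of_ne hj]
          by_cases hji : (j : ℕ) < (i : ℕ)
          · rw [if_pos hji, hu']
            rcases eq_or_ne j m with rfl | hjm
            · rw [Function.update_self, hxnorm]
            · rw [Function.update_of_ne hjm]
              exact le_of_eq (hu.1 j)
          · rw [if_neg hji, hw']
            rcases eq_or_ne j m with rfl | hjm
            · rw [Function.update_self, hxnorm]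
            · rw [Function.update_of_ne hjm]
              exact le_of_eq (hw.1 j)
      calc ∏ j, ‖G i j‖ ≤ ∏ j, if j = i then ‖u i - w i‖ else 1 :=
            Finset.prod_le_prod (fun j _ => norm_nonneg _) (fun j _ => hfac j)
        _ = ‖u i - w i‖ := by simp
  calc ‖u m - w m‖ = D u' - D w' := hnorm
    _ = ∑ i : Fin n, D.toMultilinearMap (G i) := htel
    _ ≤ ∑ i : Fin n, if i = m then 0 else ‖u i - w i‖ :=
          Finset.sum_le_sum fun i _ => hterm i
    _ = ∑ i ∈ Finset.univ.erase m, ‖u i - w i‖ := by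
          rw [← Finset.sum_erase (f := fun i => if i = m then 0 else ‖u i - w i‖)
            Finset.univ (if_pos rfl)]
          exact Finset.sum_congr rfl fun i hi => if_neg (Finset.ne_of_mem_erase hi)


/-- from Remark 5.3 c: for rotations `R, Q ∈ SO(n)`,
`|R e_n − Q e_n| ≤ Σ_{i=1}^{n−1} |R e_i − Q e_i|` (Euclidean norms of the columns). -/
theorem statement16 {n : ℕ} (hn : 2 ≤ n) (R Q : Mat n) (hR : R ∈ SO n) (hQ : Q ∈ SO n) :
    Real.sqrt (∑ k, (R k ⟨n - 1, by omega⟩ - Q k ⟨n - 1, by omega⟩) ^ 2) ≤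
      ∑ i ∈ Finset.univ.filter (fun i : Fin n => (i : ℕ) < n - 1),
        Real.sqrt (∑ k, (R k i - Q k i) ^ 2) := by
  classical
  set u : Fin n → EuclideanSpace ℝ (Fin n) := fun i => toVec (fun k => R k i) with hu'
  set w : Fin n → EuclideanSpace ℝ (Fin n) := fun i => toVec (fun k => Q k i) with hw'
  have hnorm : ∀ i : Fin n, ‖u i - w i‖ = Real.sqrt (∑ k, (R k i - Q k i) ^ 2) := by
    intro i
    rw [EuclideanSpace.norm_eq]
    congr 1
    apply Finset.sum_congr rfl
    intro k _
    rw [Real.norm_eq_abs, sq_abs]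
    congr 1
  have horth : ∀ (A : Mat n), A ∈ SO n →
      Orthonormal ℝ (fun i => (toVec (fun k => A k i) : EuclideanSpace ℝ (Fin n))) := by
    intro A hA
    rw [orthonormal_iff_ite]
    intro i j
    have h1 : A.transpose * A = 1 := mul_eq_one_comm.mp hA.1
    have h2 := congrFun (congrFun h1 i) j
    simp only [Matrix.mul_apply, Matrix.transpose_apply, Matrix.one_apply] at h2
    simpa [PiLp.inner_apply, RCLike.inner_apply, conj_trivial, toVec, mul_comm] using h2
  have hdet : ∀ (A : Mat n), A ∈ SO n →
      (EuclideanSpace.basisFun (Fin n) ℝ).toBasis.det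
        (fun i => (toVec (fun k => A k i) : EuclideanSpace ℝ (Fin n))) = 1 := by
    intro A hA
    rw [Module.Basis.det_apply]
    have : (EuclideanSpace.basisFun (Fin n) ℝ).toBasis.toMatrix
        (fun i => (toVec (fun k => A k i) : EuclideanSpace ℝ (Fin n))) = A := by
      ext i j
      rw [Module.Basis.toMatrix_apply, OrthonormalBasis.coe_toBasis_repr_apply,
        EuclideanSpace.basisFun_repr]
      rfl
    rw [this, hA.2]
  set m : Fin n := ⟨n - 1, by omega⟩ with hm
  have hkey := key (horth R hR) (horth Q hQ) (hdet R hR) (hdet Q hQ) m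
  have hfilter : Finset.univ.filter (fun i : Fin n => (i : ℕ) < n - 1) =
      Finset.univ.erase m := by
    ext i
    simp only [Finset.mem_filter, Finset.mem_univ, Finset.mem_erase, true_and, and_true]
    constructor
    · intro h hi
      rw [hi] at h
      simp [hm] at h
    · intro h
      have : (i : ℕ) ≠ n - 1 := fun hc => h (Fin.ext hc)
      omega
  rw [hfilter, ← hnorm m]
  calc ‖u m - w m‖ ≤ ∑ i ∈ Finset.univ.erase m, ‖u i - w i‖ := hkey
    _ = _ := Finset.sum_congr rfl fun i _ => hnorm i


end LayeredRigidity
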